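/- Let c : ℝ^d → (0,∞) be C¹ and let Φ be the support function of a compact convex balanced absorbing set with 0 in its interior. Suppose (γ, p) : [0,T] → ℝ^d × ℝ^d is C¹ and satisfies p'(s) = −∇c(γ(s))·Φ(p(s)) and γ'(s) ∈ c(γ(s))·∂Φ(p(s)) (subdifferential), with selection ℓ(s) ∈ ∂Φ(p(s)) measurable. Then for all s, Φ(p(s)) = Φ(p(0))·exp(−∫₀ˢ ⟨ℓ(r), ∇c(γ(r))⟩ dr). In particular, p(0) ≠ 0 implies p(s) ≠ 0 for all s ∈ [0,T]. -/

import Mathlib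

open MeasureTheory Set Filter intervalIntegral
open scoped Topology Pointwise

noncomputable section

/-- FTC for Lipschitz functions, via Rademacher + dominated convergence. -/
theorem lipschitzWith_sub_eq_integral_deriv {F : ℝ → ℝ} {K : NNReal}
    (hF : LipschitzWith K F) {a b : ℝ} (hab : a ≤ b) :
    F b - F a = ∫ x in a..b, deriv F x := by
  set μ := volume.restrict (Ioc a b) with hμ
  have hFc : Continuous F := hF.continuous
  set h : ℕ → ℝ := fun n => (1 : ℝ) / (n + 1) with hh
  have hpos : ∀ n, 0 < h n := fun n => by positivity
  have hh0 : Tendsto h atTop (𝓝 0) := tendsto_one_div_add_atTop_nhds_zero_nat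
  set G : ℕ → ℝ → ℝ := fun n x => (F (x + h n) - F x) / h n with hG
  have hae : ∀ᵐ x ∂μ, Tendsto (fun n => G n x) atTop (𝓝 (deriv F x)) := by
    refine ae_restrict_of_ae ?_
    filter_upwards [hF.ae_differentiableAt_of_real] with x hx
    have hd : HasDerivAt F (deriv F x) x := hx.hasDerivAt
    have hslope := hasDerivAt_iff_tendsto_slope.1 hd
    have hseq : Tendsto (fun n => x + h n) atTop (𝓝[≠] x) := by
      rw [tendsto_nhdsWithin_iff]
      constructor
      · simpa using tendsto_const_nhds.add hh0
      · exact Eventually.of_forall fun n => by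
          simp [ne_eq, (hpos n).ne']
    have := hslope.comp hseq
    refine this.congr fun n => ?_
    simp [slope_def_field, hG]
  have hbound : ∀ n, ∀ᵐ x ∂μ, ‖G n x‖ ≤ (K : ℝ) := by
    intro n
    refine Eventually.of_forall fun x => ?_
    have := hF.dist_le_mul (x + h n) x
    rw [Real.dist_eq, Real.dist_eq] at this
    simp only [add_sub_cancel_left, abs_of_pos (hpos n)] at this
    rw [hG, Real.norm_eq_abs, abs_div, abs_of_pos (hpos n)]
    exact div_le_of_le_mul₀ (hpos n).le (by positivity) (by linarith)
  have hmeasG : ∀ n, AEStronglyMeasurable (G n) μ :=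
    fun n => ((hFc.comp (continuous_id.add continuous_const)).sub hFc).div_const _
      |>.aestronglyMeasurable.restrict
  have hint : Integrable (fun _ : ℝ => (K : ℝ)) μ := by
    rw [hμ]
    exact integrableOn_const measure_Ioc_lt_top.ne
  have hDCT := tendsto_integral_of_dominated_convergence (fun _ => (K : ℝ))
    hmeasG hint hbound hae
  have hFi : ∀ u v : ℝ, IntervalIntegrable F volume u v := fun u v =>
    hFc.intervalIntegrable u v
  have hval : ∀ n, ∫ x, G n x ∂μ =
      ((∫ x in b..(b + h n), F x) - ∫ x in a..(a + h n), F x) / h n := by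
    intro n
    rw [hμ, ← intervalIntegral.integral_of_le hab]
    rw [hG]
    simp only
    rw [intervalIntegral.integral_div]
    congr 1
    have hci : Continuous fun x => F (x + h n) := hFc.comp (continuous_add_right _)
    rw [intervalIntegral.integral_sub (hci.intervalIntegrable _ _) (hFi a b)]
    have h1 : (∫ x in a..b, F (x + h n)) = ∫ x in (a + h n)..(b + h n), F x :=
      intervalIntegral.integral_comp_add_right F (h n)
    rw [h1]
    have h2 : (∫ x in (a + h n)..(b + h n), F x)
        = (∫ x in (a + h n)..b, F x) + ∫ x in b..(b + h n), F x :=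
      (intervalIntegral.integral_add_adjacent_intervals (hFi _ _) (hFi _ _)).symm
    have h3 : (∫ x in a..b, F x)
        = (∫ x in a..(a + h n), F x) + ∫ x in (a + h n)..b, F x :=
      (intervalIntegral.integral_add_adjacent_intervals (hFi _ _) (hFi _ _)).symm
    rw [h2, h3]; ring
  have hprim : ∀ u : ℝ, Tendsto (fun n => (∫ x in u..(u + h n), F x) / h n) atTop (𝓝 (F u)) := by
    intro u
    have hder : HasDerivAt (fun t => ∫ x in u..t, F x) (F u) u :=
      intervalIntegral.integral_hasDerivAt_right (hFi u u)
        (hFc.stronglyMeasurableAtFilter _ _) hFc.continuousAt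
    have hslope := hasDerivAt_iff_tendsto_slope.1 hder
    have hseq : Tendsto (fun n => u + h n) atTop (𝓝[≠] u) := by
      rw [tendsto_nhdsWithin_iff]
      exact ⟨by simpa using tendsto_const_nhds.add hh0,
        Eventually.of_forall fun n => by simp [ne_eq, (hpos n).ne']⟩
    have := hslope.comp hseq
    refine this.congr fun n => ?_
    simp [slope_def_field, intervalIntegral.integral_same]
  have hlim2 : Tendsto (fun n => ∫ x, G n x ∂μ) atTop (𝓝 (F b - F a)) := by
    simp only [hval]
    have : Tendsto (fun n => (∫ x in b..(b + h n), F x) / h n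
        - (∫ x in a..(a + h n), F x) / h n) atTop (𝓝 (F b - F a)) :=
      (hprim b).sub (hprim a)
    refine this.congr fun n => by ring
  have := tendsto_nhds_unique hlim2 hDCT
  rw [this, hμ, ← intervalIntegral.integral_of_le hab]

theorem support_value_exponential_along_flow {d : ℕ}
    (W : Set (EuclideanSpace ℝ (Fin d)))
    (hWc : IsCompact W) (hWconv : Convex ℝ W) (hWbal : -W = W)
    (hWabs : ∀ y : EuclideanSpace ℝ (Fin d), ∃ τ : ℝ, 0 < τ ∧ y ∈ τ • W)
    (hW0 : (0 : EuclideanSpace ℝ (Fin d)) ∈ interior W)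
    (Φ : EuclideanSpace ℝ (Fin d) → ℝ)
    (hΦ : ∀ q, Φ q = ⨆ x : W, (inner ℝ q (x : EuclideanSpace ℝ (Fin d)) : ℝ))
    (c : EuclideanSpace ℝ (Fin d) → ℝ) (hcC1 : ContDiff ℝ 1 c) (hcpos : ∀ x, 0 < c x)
    (T : ℝ) (hT : 0 < T)
    (γ p ℓ : ℝ → EuclideanSpace ℝ (Fin d))
    (hℓmeas : Measurable ℓ)
    (hℓ : ∀ s ∈ Set.Icc (0 : ℝ) T,
      ∀ q : EuclideanSpace ℝ (Fin d), Φ (p s) + (inner ℝ (ℓ s) (q - p s) : ℝ) ≤ Φ q)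
    (hp' : ∀ s ∈ Set.Icc (0 : ℝ) T,
      HasDerivAt p (-(Φ (p s)) • gradient c (γ s)) s)
    (hγ' : ∀ s ∈ Set.Icc (0 : ℝ) T, HasDerivAt γ (c (γ s) • ℓ s) s) :
    (∀ s ∈ Set.Icc (0 : ℝ) T,
      Φ (p s) = Φ (p 0) * Real.exp (-∫ r in (0 : ℝ)..s, (inner ℝ (ℓ r) (gradient c (γ r)) : ℝ))) ∧
    (p 0 ≠ 0 → ∀ s ∈ Set.Icc (0 : ℝ) T, p s ≠ 0) := by
  classical
  have hW0' : (0 : (EuclideanSpace ℝ (Fin d))) ∈ W := interior_subset hW0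
  haveI : Nonempty W := ⟨⟨0, hW0'⟩⟩
  -- bound on W
  obtain ⟨L₀, hL₀⟩ : ∃ C, ∀ x ∈ W, ‖x‖ ≤ C := by
    obtain ⟨C, hC⟩ := hWc.isBounded.subset_closedBall 0
    exact ⟨C, fun x hx => by simpa [Metric.mem_closedBall, dist_zero_right] using hC hx⟩
  set L : ℝ := max L₀ 0 with hLdef
  have hL0 : 0 ≤ L := le_max_right _ _
  have hLW : ∀ x ∈ W, ‖x‖ ≤ L := fun x hx => le_trans (hL₀ x hx) (le_max_left _ _)
  have hbdd : ∀ q : (EuclideanSpace ℝ (Fin d)), BddAbove (Set.range fun x : W => (inner ℝ q (x : (EuclideanSpace ℝ (Fin d))) : ℝ)) := by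
    intro q
    refine ⟨‖q‖ * L, ?_⟩
    rintro _ ⟨x, rfl⟩
    calc (inner ℝ q (x : (EuclideanSpace ℝ (Fin d))) : ℝ) ≤ ‖q‖ * ‖(x : (EuclideanSpace ℝ (Fin d)))‖ := real_inner_le_norm _ _
      _ ≤ ‖q‖ * L := mul_le_mul_of_nonneg_left (hLW _ x.2) (norm_nonneg q)
  have hΦge : ∀ q : (EuclideanSpace ℝ (Fin d)), ∀ x ∈ W, (inner ℝ q x : ℝ) ≤ Φ q := by
    intro q x hx
    rw [hΦ]
    exact le_ciSup (hbdd q) ⟨x, hx⟩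
  have hΦle : ∀ q : (EuclideanSpace ℝ (Fin d)), Φ q ≤ ‖q‖ * L := by
    intro q
    rw [hΦ]
    refine ciSup_le fun x => ?_
    calc (inner ℝ q (x : (EuclideanSpace ℝ (Fin d))) : ℝ) ≤ ‖q‖ * ‖(x : (EuclideanSpace ℝ (Fin d)))‖ := real_inner_le_norm _ _
      _ ≤ ‖q‖ * L := mul_le_mul_of_nonneg_left (hLW _ x.2) (norm_nonneg q)
  have hΦ0 : Φ 0 = 0 := by
    rw [hΦ]
    simp only [inner_zero_left]
    exact ciSup_const
  have hΦnn : ∀ q : (EuclideanSpace ℝ (Fin d)), 0 ≤ Φ q := by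
    intro q
    have := hΦge q 0 hW0'
    simpa using this
  have hΦadd : ∀ q r : (EuclideanSpace ℝ (Fin d)), Φ (q + r) ≤ Φ q + Φ r := by
    intro q r
    rw [hΦ (q + r)]
    refine ciSup_le fun x => ?_
    rw [inner_add_left]
    exact add_le_add (hΦge q x x.2) (hΦge r x x.2)
  have hΦ2 : ∀ q : (EuclideanSpace ℝ (Fin d)), Φ ((2:ℝ) • q) = 2 * Φ q := by
    intro q
    have h1 : Φ ((2:ℝ) • q) ≤ 2 * Φ q := by
      rw [hΦ ((2:ℝ) • q)]
      refine ciSup_le fun x => ?_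
      rw [real_inner_smul_left]
      have := hΦge q x x.2
      linarith
    have h2 : Φ q ≤ Φ ((2:ℝ) • q) / 2 := by
      rw [hΦ q]
      refine ciSup_le fun x => ?_
      have := hΦge ((2:ℝ) • q) x x.2
      rw [real_inner_smul_left] at this
      linarith
    linarith
  have hΦpos : ∀ q : (EuclideanSpace ℝ (Fin d)), q ≠ 0 → 0 < Φ q := by
    intro q hq
    have hint : interior W ∈ 𝓝 (0 : (EuclideanSpace ℝ (Fin d))) := isOpen_interior.mem_nhds hW0
    obtain ⟨ε, hε, hball⟩ := Metric.mem_nhds_iff.1 hint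
    have hqn : 0 < ‖q‖ := norm_pos_iff.2 hq
    set x : (EuclideanSpace ℝ (Fin d)) := (ε / (2 * ‖q‖)) • q with hx
    have hxW : x ∈ W := by
      refine interior_subset (hball ?_)
      rw [Metric.mem_ball, dist_zero_right, hx, norm_smul]
      rw [Real.norm_eq_abs, abs_of_pos (by positivity)]
      rw [div_mul_eq_mul_div, mul_comm]
      calc ‖q‖ * ε / (2 * ‖q‖) = ε / 2 := by field_simp
        _ < ε := by linarith
    have : (inner ℝ q x : ℝ) = (ε / (2 * ‖q‖)) * ‖q‖ ^ 2 := by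
      rw [hx, real_inner_smul_right, real_inner_self_eq_norm_sq]
    have hpos : (0:ℝ) < (ε / (2 * ‖q‖)) * ‖q‖ ^ 2 := by positivity
    calc (0:ℝ) < (inner ℝ q x : ℝ) := by rw [this]; exact hpos
      _ ≤ Φ q := hΦge q x hxW
  -- subgradient facts
  have hℓp : ∀ s ∈ Set.Icc (0:ℝ) T, (inner ℝ (ℓ s) (p s) : ℝ) = Φ (p s) := by
    intro s hs
    have h1 := hℓ s hs ((2:ℝ) • p s)
    have h2 := hℓ s hs 0
    rw [hΦ2] at h1
    have e1 : (2:ℝ) • p s - p s = p s := by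
      rw [two_smul]; abel
    rw [e1] at h1
    rw [zero_sub, inner_neg_right, hΦ0] at h2
    linarith
  have hℓle : ∀ s ∈ Set.Icc (0:ℝ) T, ∀ q : (EuclideanSpace ℝ (Fin d)), (inner ℝ (ℓ s) q : ℝ) ≤ Φ q := by
    intro s hs q
    have h1 := hℓ s hs (p s + q)
    rw [add_sub_cancel_left] at h1
    have h2 := hΦadd (p s) q
    linarith
  have hℓnorm : ∀ s ∈ Set.Icc (0:ℝ) T, ‖ℓ s‖ ≤ L := by
    intro s hs
    have h1 := hℓle s hs (ℓ s)
    rw [real_inner_self_eq_norm_sq] at h1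
    have h2 := hΦle (ℓ s)
    by_cases h0 : ‖ℓ s‖ = 0
    · rw [h0]; exact hL0
    · have hpos : 0 < ‖ℓ s‖ := lt_of_le_of_ne (norm_nonneg _) (Ne.symm h0)
      nlinarith
  -- continuity facts
  have hpc : ContinuousOn p (Set.Icc 0 T) := fun s hs =>
    (hp' s hs).continuousAt.continuousWithinAt
  have hγc : ContinuousOn γ (Set.Icc 0 T) := fun s hs =>
    (hγ' s hs).continuousAt.continuousWithinAt
  have hgradc : Continuous (fun x : (EuclideanSpace ℝ (Fin d)) => gradient c x) := by
    have : Continuous fun x : (EuclideanSpace ℝ (Fin d)) => (InnerProductSpace.toDual ℝ (EuclideanSpace ℝ (Fin d))).symm (fderiv ℝ c x) :=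
      (InnerProductSpace.toDual ℝ (EuclideanSpace ℝ (Fin d))).symm.continuous.comp (hcC1.continuous_fderiv one_ne_zero)
    exact this
  have hgc : ContinuousOn (fun s => gradient c (γ s)) (Set.Icc 0 T) :=
    hgradc.comp_continuousOn hγc
  obtain ⟨Mg₀, hMg₀⟩ := isCompact_Icc.exists_bound_of_continuousOn hgc
  set Mg : ℝ := max Mg₀ 0 with hMgdef
  have hMg0 : 0 ≤ Mg := le_max_right _ _
  have hMg : ∀ s ∈ Set.Icc (0:ℝ) T, ‖gradient c (γ s)‖ ≤ Mg := fun s hs =>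
    le_trans (hMg₀ s hs) (le_max_left _ _)
  set K : ℝ := L * Mg with hKdef
  have hK0 : 0 ≤ K := mul_nonneg hL0 hMg0
  have hpd : ∀ s ∈ Set.Icc (0:ℝ) T, ‖-(Φ (p s)) • gradient c (γ s)‖ ≤ K * ‖p s‖ := by
    intro s hs
    rw [norm_smul, Real.norm_eq_abs, abs_neg, abs_of_nonneg (hΦnn _)]
    calc Φ (p s) * ‖gradient c (γ s)‖ ≤ (‖p s‖ * L) * Mg :=
          mul_le_mul (hΦle _) (hMg s hs) (norm_nonneg _)
            (mul_nonneg (norm_nonneg _) hL0)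
      _ = K * ‖p s‖ := by ring
  -- forward Gronwall
  have hgron : ∀ s ∈ Set.Icc (0:ℝ) T, ‖p s‖ ≤ ‖p 0‖ * Real.exp (K * s) := by
    intro s hs
    have := norm_le_gronwallBound_of_norm_deriv_right_le (f := p)
      (f' := fun t => -(Φ (p t)) • gradient c (γ t)) (δ := ‖p 0‖) (K := K) (ε := 0)
      (a := 0) (b := T) hpc
      (fun t ht => (hp' t (Set.Ico_subset_Icc_self ht)).hasDerivWithinAt)
      le_rfl
      (fun t ht => by
        rw [add_zero]
        exact hpd t (Set.Ico_subset_Icc_self ht))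
      s hs
    rwa [gronwallBound_ε0, sub_zero] at this
  -- backward Gronwall
  have hback : ∀ s ∈ Set.Icc (0:ℝ) T, ‖p 0‖ ≤ ‖p s‖ * Real.exp (K * s) := by
    intro s hs
    set q : ℝ → (EuclideanSpace ℝ (Fin d)) := fun t => p (s - t) with hq
    have hmem : ∀ t ∈ Set.Icc (0:ℝ) s, s - t ∈ Set.Icc (0:ℝ) T := by
      intro t ht
      constructor
      · linarith [ht.2]
      · linarith [ht.1, hs.2]
    have hq' : ∀ t ∈ Set.Icc (0:ℝ) s,
        HasDerivAt q ((-1 : ℝ) • (-(Φ (p (s - t))) • gradient c (γ (s - t)))) t := by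
      intro t ht
      have hlin : HasDerivAt (fun u : ℝ => s - u) (-1) t := by
        simpa using (hasDerivAt_id t).const_sub s
      exact (hp' (s - t) (hmem t ht)).scomp t hlin |>.congr_deriv (by simp)
    have hqc : ContinuousOn q (Set.Icc 0 s) := fun t ht =>
      (hq' t ht).continuousAt.continuousWithinAt
    have := norm_le_gronwallBound_of_norm_deriv_right_le (f := q)
      (f' := fun t => (-1 : ℝ) • (-(Φ (p (s - t))) • gradient c (γ (s - t))))
      (δ := ‖p s‖) (K := K) (ε := 0) (a := 0) (b := s) hqc
      (fun t ht => (hq' t (Set.Ico_subset_Icc_self ht)).hasDerivWithinAt)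
      (by simp [hq])
      (fun t ht => by
        rw [add_zero, norm_smul]
        simp only [norm_neg, norm_one, Real.norm_eq_abs, abs_neg, abs_one, one_mul]
        exact hpd (s - t) (hmem t (Set.Ico_subset_Icc_self ht)))
      s (Set.right_mem_Icc.2 hs.1)
    rw [gronwallBound_ε0, sub_zero] at this
    simpa [hq] using this
  have hconc2 : p 0 ≠ 0 → ∀ s ∈ Set.Icc (0:ℝ) T, p s ≠ 0 := by
    intro h0 s hs hps
    have := hback s hs
    rw [hps] at this
    simp at this
    exact h0 this
  by_cases hp0 : p 0 = 0
  · refine ⟨?_, fun h => absurd hp0 h⟩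
    intro s hs
    have hzero : p s = 0 := by
      have := hgron s hs
      rw [hp0] at this
      simp at this
      exact this
    rw [hzero, hp0, hΦ0, zero_mul]
  · -- main case : p 0 ≠ 0
    have hpne := hconc2 hp0
    refine ⟨?_, fun _ => hpne⟩
    have hfpos : ∀ s ∈ Set.Icc (0:ℝ) T, 0 < Φ (p s) := fun s hs => hΦpos _ (hpne s hs)
    -- Lipschitz estimate for Φ
    have hΦLip : ∀ a b : EuclideanSpace ℝ (Fin d), |Φ a - Φ b| ≤ L * ‖a - b‖ := by
      intro a b
      have h1 : Φ a - Φ b ≤ L * ‖a - b‖ := by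
        have := hΦadd b (a - b)
        rw [add_sub_cancel] at this
        have h2 := hΦle (a - b)
        linarith [mul_comm ‖a - b‖ L]
      have h2 : Φ b - Φ a ≤ L * ‖a - b‖ := by
        have := hΦadd a (b - a)
        rw [add_sub_cancel] at this
        have h3 := hΦle (b - a)
        rw [norm_sub_rev] at h3
        linarith [mul_comm ‖a - b‖ L]
      exact abs_sub_le_iff.2 ⟨h1, h2⟩
    -- bound on ‖p‖, Lipschitz bound for p
    obtain ⟨Mp₀, hMp₀⟩ := isCompact_Icc.exists_bound_of_continuousOn hpc
    set Mp : ℝ := max Mp₀ 0 with hMpdef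
    have hMp0 : 0 ≤ Mp := le_max_right _ _
    have hMp : ∀ s ∈ Set.Icc (0:ℝ) T, ‖p s‖ ≤ Mp := fun s hs =>
      le_trans (hMp₀ s hs) (le_max_left _ _)
    set M₁ : ℝ := K * Mp with hM₁def
    have hM₁0 : 0 ≤ M₁ := mul_nonneg hK0 hMp0
    have hpM : ∀ x ∈ Set.Icc (0:ℝ) T, ∀ y ∈ Set.Icc (0:ℝ) T,
        ‖p y - p x‖ ≤ M₁ * ‖y - x‖ := by
      intro x hx y hy
      refine Convex.norm_image_sub_le_of_norm_hasDerivWithin_le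
        (f' := fun t => -(Φ (p t)) • gradient c (γ t))
        (fun t ht => (hp' t ht).hasDerivWithinAt) ?_ (convex_Icc 0 T) hx hy
      intro t ht
      calc ‖-(Φ (p t)) • gradient c (γ t)‖ ≤ K * ‖p t‖ := hpd t ht
        _ ≤ K * Mp := mul_le_mul_of_nonneg_left (hMp t ht) hK0
    -- continuity and minimum of Φ ∘ p
    have hΦcont : Continuous Φ := by
      refine LipschitzWith.continuous (K := L.toNNReal) ?_
      refine LipschitzWith.of_dist_le_mul fun a b => ?_
      rw [Real.dist_eq, dist_eq_norm, Real.coe_toNNReal L hL0]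
      exact hΦLip a b
    have hfc : ContinuousOn (fun s => Φ (p s)) (Set.Icc 0 T) :=
      hΦcont.comp_continuousOn hpc
    obtain ⟨s₀, hs₀mem, hs₀min⟩ :=
      isCompact_Icc.exists_isMinOn ⟨0, Set.left_mem_Icc.2 hT.le⟩ hfc
    set δ : ℝ := Φ (p s₀) with hδdef
    have hδpos : 0 < δ := hfpos s₀ hs₀mem
    have hδle : ∀ s ∈ Set.Icc (0:ℝ) T, δ ≤ Φ (p s) := fun s hs => hs₀min hs
    -- log ∘ Φ ∘ p is Lipschitz on [0,T]
    set Kl : ℝ := L * M₁ / δ with hKldef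
    have hKl0 : 0 ≤ Kl := by positivity
    have hlog1 : ∀ a b : ℝ, δ ≤ a → δ ≤ b → b ≤ a →
        Real.log a - Real.log b ≤ (a - b) / δ := by
      intro a b ha hb hba
      have hapos : 0 < a := lt_of_lt_of_le hδpos ha
      have hbpos : 0 < b := lt_of_lt_of_le hδpos hb
      rw [← Real.log_div hapos.ne' hbpos.ne']
      have h1 : Real.log (a / b) ≤ a / b - 1 :=
        Real.log_le_sub_one_of_pos (by positivity)
      have h2 : a / b - 1 = (a - b) / b := by field_simp
      have h3 : (a - b) / b ≤ (a - b) / δ :=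
        div_le_div_of_nonneg_left (by linarith) hδpos hb
      linarith
    have hloglip : LipschitzOnWith Kl.toNNReal (fun s => Real.log (Φ (p s)))
        (Set.Icc 0 T) := by
      rw [lipschitzOnWith_iff_dist_le_mul]
      intro x hx y hy
      rw [Real.dist_eq, Real.dist_eq, Real.coe_toNNReal Kl hKl0]
      have key : |Real.log (Φ (p x)) - Real.log (Φ (p y))| ≤ |Φ (p x) - Φ (p y)| / δ := by
        rcases le_total (Φ (p y)) (Φ (p x)) with h | h
        · rw [abs_of_nonneg (sub_nonneg.2 (Real.log_le_log (hfpos y hy) h)),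
            abs_of_nonneg (by linarith : (0:ℝ) ≤ Φ (p x) - Φ (p y))]
          exact hlog1 _ _ (hδle x hx) (hδle y hy) h
        · rw [abs_of_nonpos (sub_nonpos.2 (Real.log_le_log (hfpos x hx) h)),
            abs_of_nonpos (by linarith : Φ (p x) - Φ (p y) ≤ 0)]
          have := hlog1 _ _ (hδle y hy) (hδle x hx) h
          rw [neg_sub, neg_sub]
          linarith
      have h2 : |Φ (p x) - Φ (p y)| ≤ L * (M₁ * |x - y|) := by
        calc |Φ (p x) - Φ (p y)| ≤ L * ‖p x - p y‖ := hΦLip _ _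
          _ ≤ L * (M₁ * |x - y|) := by
              refine mul_le_mul_of_nonneg_left ?_ hL0
              have := hpM y hy x hx
              rwa [Real.norm_eq_abs] at this
      calc |Real.log (Φ (p x)) - Real.log (Φ (p y))|
          ≤ |Φ (p x) - Φ (p y)| / δ := key
        _ ≤ L * (M₁ * |x - y|) / δ := (div_le_div_iff_of_pos_right hδpos).2 h2
        _ = Kl * |x - y| := by rw [hKldef]; ring
    obtain ⟨Ft, hFtlip, hFteq⟩ := hloglip.extend_real
    set g : ℝ → ℝ := fun r => (inner ℝ (ℓ r) (gradient c (γ r)) : ℝ) with hgdef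
    have hexpeq : ∀ t ∈ Set.Icc (0:ℝ) T, Real.exp (Ft t) = Φ (p t) := by
      intro t ht
      rw [← hFteq ht]
      exact Real.exp_log (hfpos t ht)
    -- key pointwise derivative identity
    have hkey : ∀ r ∈ Set.Ioo (0:ℝ) T, DifferentiableAt ℝ Ft r →
        deriv Ft r = -g r := by
      intro r hr hdiff
      have hrIcc : r ∈ Set.Icc (0:ℝ) T := Set.Ioo_subset_Icc_self hr
      have hnhds : Set.Icc (0:ℝ) T ∈ 𝓝 r := Icc_mem_nhds hr.1 hr.2
      set φ : ℝ → ℝ := fun t => Real.exp (Ft t) - (inner ℝ (ℓ r) (p t) : ℝ) with hφdef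
      have hφr : φ r = 0 := by
        rw [hφdef]
        simp only
        rw [hexpeq r hrIcc, hℓp r hrIcc, sub_self]
      have hφnn : ∀ t ∈ Set.Icc (0:ℝ) T, 0 ≤ φ t := by
        intro t ht
        have h1 := hℓ r hrIcc (p t)
        rw [inner_sub_right] at h1
        rw [hℓp r hrIcc] at h1
        rw [hφdef]
        simp only
        rw [hexpeq t ht]
        linarith
      have hmin : IsLocalMin φ r := by
        refine Filter.eventually_of_mem hnhds fun t ht => ?_
        rw [hφr]
        exact hφnn t ht
      have hpd' : HasDerivAt p (-(Φ (p r)) • gradient c (γ r)) r := hp' r hrIcc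
      have hinner : HasDerivAt (fun t => (inner ℝ (ℓ r) (p t) : ℝ))
          ((inner ℝ (ℓ r) (-(Φ (p r)) • gradient c (γ r)) : ℝ)) r := by
        have h := (innerSL ℝ (ℓ r)).hasFDerivAt.comp_hasDerivAt r hpd'
        exact h.congr_deriv (by simp)
      have hφd : HasDerivAt φ
          (Real.exp (Ft r) * deriv Ft r
            - (inner ℝ (ℓ r) (-(Φ (p r)) • gradient c (γ r)) : ℝ)) r :=
        (hdiff.hasDerivAt.exp).sub hinner
      have hz := hmin.hasDerivAt_eq_zero hφd
      rw [hexpeq r hrIcc, real_inner_smul_right] at hz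
      have hne := (hfpos r hrIcc).ne'
      have h2 : Φ (p r) * (deriv Ft r + g r) = 0 := by
        rw [hgdef]
        simp only
        linear_combination hz
      rcases mul_eq_zero.1 h2 with h | h
      · exact absurd h hne
      · linarith
    -- integrability of g
    have hgint : ∀ s ∈ Set.Icc (0:ℝ) T, IntervalIntegrable g volume 0 s := by
      intro s hs
      rw [intervalIntegrable_iff_integrableOn_Ioc_of_le hs.1]
      have hsub : Set.Ioc (0:ℝ) s ⊆ Set.Icc (0:ℝ) T := fun r hr =>
        ⟨hr.1.le, le_trans hr.2 hs.2⟩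
      have hmeas : AEStronglyMeasurable g (volume.restrict (Set.Ioc 0 s)) := by
        refine AEStronglyMeasurable.inner ?_ ?_
        · exact hℓmeas.aestronglyMeasurable.restrict
        · exact (hgc.mono hsub).aestronglyMeasurable measurableSet_Ioc
      refine Integrable.mono' (g := fun _ => L * Mg)
        (integrableOn_const measure_Ioc_lt_top.ne) hmeas ?_
      rw [ae_restrict_iff' measurableSet_Ioc]
      refine Eventually.of_forall fun r hr => ?_
      have hrIcc := hsub hr
      rw [hgdef]
      simp only [Real.norm_eq_abs]
      calc |(inner ℝ (ℓ r) (gradient c (γ r)) : ℝ)|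
          ≤ ‖ℓ r‖ * ‖gradient c (γ r)‖ := abs_real_inner_le_norm _ _
        _ ≤ L * Mg := mul_le_mul (hℓnorm r hrIcc) (hMg r hrIcc)
            (norm_nonneg _) hL0
    -- conclusion
    intro s hs
    have h0mem : (0:ℝ) ∈ Set.Icc (0:ℝ) T := Set.left_mem_Icc.2 hT.le
    have hftc := lipschitzWith_sub_eq_integral_deriv hFtlip hs.1
    have hcongr : (∫ x in (0:ℝ)..s, deriv Ft x) = ∫ x in (0:ℝ)..s, -(g x) := by
      refine intervalIntegral.integral_congr_ae ?_
      have hae1 : ∀ᵐ r : ℝ ∂volume, DifferentiableAt ℝ Ft r :=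
        hFtlip.ae_differentiableAt_of_real
      have hTne : ∀ᵐ r : ℝ ∂volume, r ≠ T := by
        rw [ae_iff]
        have : {a : ℝ | ¬a ≠ T} = {T} := by ext a; simp
        rw [this]
        exact Real.volume_singleton
      filter_upwards [hae1, hTne] with r hdiff hrT hrmem
      rw [Set.uIoc_of_le hs.1] at hrmem
      exact hkey r ⟨hrmem.1, lt_of_le_of_ne (le_trans hrmem.2 hs.2) hrT⟩ hdiff
    rw [intervalIntegral.integral_neg] at hcongr
    have heq : Real.log (Φ (p s)) = Real.log (Φ (p 0)) + -(∫ x in (0:ℝ)..s, g x) := by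
      have h1 : Ft s = Real.log (Φ (p s)) := (hFteq hs).symm
      have h2 : Ft 0 = Real.log (Φ (p 0)) := (hFteq h0mem).symm
      rw [hcongr, h1, h2] at hftc
      linarith
    calc Φ (p s) = Real.exp (Real.log (Φ (p s))) := (Real.exp_log (hfpos s hs)).symm
      _ = Real.exp (Real.log (Φ (p 0)) + -(∫ x in (0:ℝ)..s, g x)) := by rw [heq]
      _ = Φ (p 0) * Real.exp (-(∫ x in (0:ℝ)..s, g x)) := by
          rw [Real.exp_add, Real.exp_log (hfpos 0 h0mem)]
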